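/- arXiv:1403.2649 — 2 statements merged into one kernel-verified Lean document; each statement's English description precedes it below -/
import Mathlib

section
/- Let T ⊂ ℝ² be a nondegenerate closed triangle and f : T → ℝ a bounded function that is continuous at Lebesgue-almost every point of T. Then f is Riemann integrable on T in the triangular-subdivision sense. -/
open MeasureTheory Filter Real

noncomputable section

/-- Points of the plane. -/
abbrev Pt := ℝ × ℝ

/-- The (closed) triangle with vertices `A`, `B`, `C`: their convex hull. -/
def triangle (A B C : Pt) : Set Pt := convexHull ℝ {A, B, C}

/-- The triangle `Δ(A,B,C)` is nondegenerate iff `A`, `B`, `C` are not collinear. -/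
def Nondeg (A B C : Pt) : Prop := ¬ Collinear ℝ ({A, B, C} : Set Pt)

/-- Two-dimensional Lebesgue volume, as a real number. -/
def vol (S : Set Pt) : ℝ := (volume S).toReal

/-- Signed discrepancy `δ_N(S; P, Ω)` of the list of points `P` at the set `S`,
relative to the domain `Ω`. -/
def sdisc {N : ℕ} (S : Set Pt) (P : Fin N → Pt) (Ω : Set Pt) : ℝ :=
  vol (S ∩ Ω) / vol Ω - (Nat.card {i : Fin N // P i ∈ S} : ℝ) / N

/-- Discrepancy `D_N(𝒮; P, Ω)`: supremum of the absolute signed discrepancy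
over a class `𝒮` of sets. -/
def Disc {N : ℕ} (𝒮 : Set (Set Pt)) (P : Fin N → Pt) (Ω : Set Pt) : ℝ :=
  ⨆ S ∈ 𝒮, |sdisc S P Ω|

/-- The half-open parallelogram `𝒯_{a,b,C}` anchored at `C` with sides
`a(A-C)` and `b(B-C)`. -/
def parlg (A B C : Pt) (a b : ℝ) : Set Pt :=
  {x | ∃ s t : ℝ, 0 ≤ s ∧ s < a ∧ 0 ≤ t ∧ t < b ∧ x = C + s • (A - C) + t • (B - C)}

/-- The family `𝒮_C` of parallelograms anchored at `C`, intersected with the triangle. -/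
def anchoredFam (A B C : Pt) : Set (Set Pt) :=
  {S | ∃ a b : ℝ, 0 < a ∧ a ≤ 1 ∧ 0 < b ∧ b ≤ 1 ∧ S = parlg A B C a b ∩ triangle A B C}

/-- The class `𝒮_A ∪ 𝒮_B ∪ 𝒮_C` of anchored parallelograms of the triangle `Δ(A,B,C)`. -/
def parFam (A B C : Pt) : Set (Set Pt) :=
  anchoredFam B C A ∪ anchoredFam A C B ∪ anchoredFam A B C

/-- The parallelogram discrepancy `D_N^P(P; Δ(A,B,C))`. -/
def parDisc {N : ℕ} (P : Fin N → Pt) (A B C : Pt) : ℝ :=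
  Disc (parFam A B C) P (triangle A B C)

/-- Midpoint of two points. -/
def mid (P Q : Pt) : Pt := (2⁻¹ : ℝ) • (P + Q)

/-- A triangle recorded as the (ordered) triple of its vertices. -/
abbrev Tri2 := Pt × Pt × Pt

/-- The centroid of a triangle: the average of its three vertices. -/
def ctr (T : Tri2) : Pt := (3⁻¹ : ℝ) • (T.1 + T.2.1 + T.2.2)

/-- The point set of a triangle given by its vertices. -/
def triSet (T : Tri2) : Set Pt := triangle T.1 T.2.1 T.2.2

/-- The four-way subdivision of a triangle: subtriangle number `d ∈ {0,1,2,3}`. -/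
def subdiv (T : Tri2) (d : ℕ) : Tri2 :=
  let A := T.1; let B := T.2.1; let C := T.2.2
  if d = 0 then (mid B C, mid A C, mid A B)
  else if d = 1 then (A, mid A B, mid A C)
  else if d = 2 then (mid A B, B, mid B C)
  else (mid A C, mid B C, C)

/-- The triangular van der Corput point `f_T(i)`: digits of `i` in base `4` select a
nested subtriangle, and `f_T(i)` is its centroid. -/
def vdc (T : Tri2) (i : ℕ) : Pt :=
  if h : i = 0 then ctr T else vdc (subdiv T (i % 4)) (i / 4)
termination_by i
decreasing_by exact Nat.div_lt_self (Nat.pos_of_ne_zero h) (by norm_num)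

/-- The `i`-th subtriangle (for `i < 4^k`) of the standard level-`k` subdivision of `T`,
indexed by the base-4 digits of `i`. -/
def subdivAt (T : Tri2) : ℕ → ℕ → Tri2
  | 0, _ => T
  | (k+1), i => subdiv (subdivAt T k (i / 4)) (i % 4)

/-- The standard level-`k` subdivision of a triangle: the set of the `4^k` congruent
subtriangles obtained by `k` recursive four-way subdivisions. -/
def level (T : Tri2) : ℕ → Set Tri2
  | 0 => {T}
  | (k+1) => {S | ∃ S' ∈ level T k, ∃ d < 4, S = subdiv S' d}

/-- Riemann integrability (in the triangular-subdivision sense) of `f` on the closed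
triangle `T`, with integral mean `μ`: every sequence of tagged Riemann sums over the
level-`k` subdivisions converges to `μ`. -/
def RiemannMean (T : Tri2) (f : Pt → ℝ) (μ : ℝ) : Prop :=
  ∀ x : ℕ → ℕ → Pt, (∀ k i, i < 4^k → x k i ∈ triSet (subdivAt T k i)) →
    Tendsto (fun k => (4^k : ℝ)⁻¹ * ∑ i ∈ Finset.range (4^k), f (x k i)) atTop (nhds μ)

/-- A real number is a quadratic irrational if it has the form `(a + b√c)/d` with
integers `a,b,c,d`, `b ≠ 0`, `d ≠ 0`, `c > 0` and `c` not a perfect square. -/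
def QuadIrr (θ : ℝ) : Prop :=
  ∃ a b c d : ℤ, b ≠ 0 ∧ d ≠ 0 ∧ 0 < c ∧ (∀ m : ℤ, c ≠ m ^ 2) ∧
    θ = ((a : ℝ) + (b : ℝ) * Real.sqrt (c : ℝ)) / (d : ℝ)

/-- Distance from a real number to the nearest integer. -/
def distToInt (x : ℝ) : ℝ := |x - round x|

/-- A real number `θ` is badly approximable if `n‖nθ‖ > c` for all positive `n`,
for some constant `c > 0`. -/
def BadlyApprox (θ : ℝ) : Prop :=
  ∃ c : ℝ, 0 < c ∧ ∀ n : ℕ, 0 < n → c < (n : ℝ) * distToInt ((n : ℝ) * θ)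

end

open MeasureTheory Filter Pointwise

noncomputable section RiemannAux

instance : Measure.IsAddHaarMeasure (volume : Measure Pt) := by
  rw [show (volume : Measure Pt) = (volume : Measure ℝ).prod volume from rfl]
  exact Measure.prod.instIsAddHaarMeasure _ _

lemma tri_convex (A B C : Pt) : Convex ℝ (triangle A B C) := convex_convexHull ℝ _

lemma tri_compact (A B C : Pt) : IsCompact (triangle A B C) :=
  (Set.toFinite ({A, B, C} : Set Pt)).isCompact_convexHull ℝ

lemma tri_closed (A B C : Pt) : IsClosed (triangle A B C) := (tri_compact A B C).isClosed

lemma vertex_mem (A B C : Pt) : A ∈ triangle A B C ∧ B ∈ triangle A B C ∧ C ∈ triangle A B C :=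
  ⟨subset_convexHull ℝ _ (by simp), subset_convexHull ℝ _ (by simp),
   subset_convexHull ℝ _ (by simp)⟩

lemma mem_tri {A B C : Pt} {a b c : ℝ} (ha : 0 ≤ a) (hb : 0 ≤ b) (hc : 0 ≤ c)
    (habc : a + b + c = 1) : a • A + b • B + c • C ∈ triangle A B C := by
  obtain ⟨hA, hB, hC⟩ := vertex_mem A B C
  rcases eq_or_lt_of_le (add_nonneg ha hb) with h0 | h0
  · have hc1 : c = 1 := by linarith
    have ha0 : a = 0 := by linarith [hb]
    have hb0 : b = 0 := by linarith
    simpa [ha0, hb0, hc1] using hC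
  · set t := a + b with ht
    have h1 : a • A + b • B + c • C = t • ((a/t) • A + (b/t) • B) + c • C := by
      rw [smul_add, smul_smul, smul_smul, mul_div_cancel₀ _ (ne_of_gt h0),
        mul_div_cancel₀ _ (ne_of_gt h0)]
    rw [h1]
    exact (tri_convex A B C)
      ((tri_convex A B C) hA hB (by positivity) (by positivity) (by field_simp; exact ht.symm))
      hC (le_of_lt h0) hc habc

lemma tri_subset {A B C : Pt} {s : Set Pt} (hs : Convex ℝ s) (hA : A ∈ s) (hB : B ∈ s)
    (hC : C ∈ s) : triangle A B C ⊆ s :=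
  convexHull_min (by rintro x (rfl | rfl | rfl) <;> assumption) hs

lemma mem_triangle_iff {A B C x : Pt} :
    x ∈ triangle A B C ↔ ∃ a b c : ℝ, 0 ≤ a ∧ 0 ≤ b ∧ 0 ≤ c ∧ a + b + c = 1 ∧
      x = a • A + b • B + c • C := by
  constructor
  · intro hx
    have : triangle A B C ⊆ {y : Pt | ∃ a b c : ℝ, 0 ≤ a ∧ 0 ≤ b ∧ 0 ≤ c ∧ a + b + c = 1 ∧
        y = a • A + b • B + c • C} := by
      apply tri_subset
      · rintro y ⟨a1,b1,c1,ha1,hb1,hc1,hs1,hy⟩ z ⟨a2,b2,c2,ha2,hb2,hc2,hs2,hz⟩ u v hu hv huv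
        refine ⟨u*a1+v*a2, u*b1+v*b2, u*c1+v*c2, by positivity, by positivity, by positivity,
          by nlinarith, ?_⟩
        subst hy hz
        module
      · exact ⟨1, 0, 0, by norm_num, by norm_num, by norm_num, by norm_num, by module⟩
      · exact ⟨0, 1, 0, by norm_num, by norm_num, by norm_num, by norm_num, by module⟩
      · exact ⟨0, 0, 1, by norm_num, by norm_num, by norm_num, by norm_num, by module⟩
    exact this hx
  · rintro ⟨a,b,c,ha,hb,hc,habc,rfl⟩
    exact mem_tri ha hb hc habc

end RiemannAux

open MeasureTheory Filter Pointwise ENNReal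

noncomputable section RiemannAux2

/-- The affine map `x ↦ p + r • x`. -/
def homo (p : Pt) (r : ℝ) : Pt →ᵃ[ℝ] Pt where
  toFun x := p + r • x
  linear := r • LinearMap.id
  map_vadd' p' v := by
    simp only [LinearMap.smul_apply, LinearMap.id_coe, id_eq, vadd_eq_add]
    module

lemma homo_image_triangle (p : Pt) (r : ℝ) (A B C : Pt) :
    (fun y => p + r • y) '' triangle A B C = triangle (p + r • A) (p + r • B) (p + r • C) := by
  have h := AffineMap.image_convexHull (homo p r) ({A, B, C} : Set Pt)
  have h2 : (homo p r) '' ({A, B, C} : Set Pt) = {p + r • A, p + r • B, p + r • C} := by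
    simp [homo, Set.image_insert_eq, AffineMap.coe_mk]
  unfold triangle
  rw [← h2, ← h]
  rfl

lemma volume_homo_image (p : Pt) (r : ℝ) (s : Set Pt) :
    volume ((fun y => p + r • y) '' s) = ENNReal.ofReal (|r| ^ 2) * volume s := by
  have h1 : (fun y : Pt => p + r • y) '' s = p +ᵥ (r • s) := by
    rw [← Set.image_smul, ← Set.image_vadd, Set.image_image]
    rfl
  rw [h1, measure_vadd, Measure.addHaar_smul]
  norm_num

lemma mid_mem {s : Set Pt} (hs : Convex ℝ s) {P Q : Pt} (hP : P ∈ s) (hQ : Q ∈ s) :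
    mid P Q ∈ s := by
  have : mid P Q = (2⁻¹ : ℝ) • P + (2⁻¹ : ℝ) • Q := by unfold mid; module
  rw [this]
  exact hs hP hQ (by norm_num) (by norm_num) (by norm_num)

/-- Each subdivision child is the image of the parent under a homothety of ratio `±1/2`. -/
lemma triSet_subdiv_eq (S : Tri2) (d : ℕ) :
    ∃ p : Pt, ∃ r : ℝ, |r| = 2⁻¹ ∧
      triSet (subdiv S d) = (fun y => p + r • y) '' triSet S := by
  obtain ⟨A, B, C⟩ := S
  unfold subdiv triSet
  split_ifs with h0 h1 h2
  · refine ⟨(2⁻¹ : ℝ) • (A + B + C), -2⁻¹, by norm_num, ?_⟩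
    rw [homo_image_triangle]
    dsimp only
    have e1 : mid B C = (2⁻¹ : ℝ) • (A + B + C) + (-2⁻¹ : ℝ) • A := by unfold mid; module
    have e2 : mid A C = (2⁻¹ : ℝ) • (A + B + C) + (-2⁻¹ : ℝ) • B := by unfold mid; module
    have e3 : mid A B = (2⁻¹ : ℝ) • (A + B + C) + (-2⁻¹ : ℝ) • C := by unfold mid; module
    rw [e1, e2, e3]
  · refine ⟨(2⁻¹ : ℝ) • A, 2⁻¹, by norm_num, ?_⟩
    rw [homo_image_triangle]
    dsimp only
    have e1 : A = (2⁻¹ : ℝ) • A + (2⁻¹ : ℝ) • A := by module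
    have e2 : mid A B = (2⁻¹ : ℝ) • A + (2⁻¹ : ℝ) • B := by unfold mid; module
    have e3 : mid A C = (2⁻¹ : ℝ) • A + (2⁻¹ : ℝ) • C := by unfold mid; module
    rw [e2, e3]; nth_rewrite 1 [e1]; rfl
  · refine ⟨(2⁻¹ : ℝ) • B, 2⁻¹, by norm_num, ?_⟩
    rw [homo_image_triangle]
    dsimp only
    have e1 : mid A B = (2⁻¹ : ℝ) • B + (2⁻¹ : ℝ) • A := by unfold mid; module
    have e2 : B = (2⁻¹ : ℝ) • B + (2⁻¹ : ℝ) • B := by module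
    have e3 : mid B C = (2⁻¹ : ℝ) • B + (2⁻¹ : ℝ) • C := by unfold mid; module
    rw [e1, e3]; nth_rewrite 2 [e2]; rfl
  · refine ⟨(2⁻¹ : ℝ) • C, 2⁻¹, by norm_num, ?_⟩
    rw [homo_image_triangle]
    dsimp only
    have e1 : mid A C = (2⁻¹ : ℝ) • C + (2⁻¹ : ℝ) • A := by unfold mid; module
    have e2 : mid B C = (2⁻¹ : ℝ) • C + (2⁻¹ : ℝ) • B := by unfold mid; module
    have e3 : C = (2⁻¹ : ℝ) • C + (2⁻¹ : ℝ) • C := by module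
    rw [e1, e2]; nth_rewrite 3 [e3]; rfl

lemma volume_triSet_subdiv (S : Tri2) (d : ℕ) :
    volume (triSet (subdiv S d)) = (4 : ℝ≥0∞)⁻¹ * volume (triSet S) := by
  obtain ⟨p, r, hr, heq⟩ := triSet_subdiv_eq S d
  rw [heq, volume_homo_image, hr]
  norm_num
  rw [show (1:ℝ)/4 = (4:ℝ)⁻¹ by norm_num, ENNReal.ofReal_inv_of_pos (by norm_num)]
  norm_num

lemma subdiv_subset (S : Tri2) (d : ℕ) : triSet (subdiv S d) ⊆ triSet S := by
  obtain ⟨A, B, C⟩ := S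
  obtain ⟨hA, hB, hC⟩ := vertex_mem A B C
  have hcv := tri_convex A B C
  unfold subdiv triSet
  split_ifs <;> simp only <;>
    (refine tri_subset hcv ?_ ?_ ?_ <;>
      first
        | exact hA
        | exact hB
        | exact hC
        | exact mid_mem hcv hA hB
        | exact mid_mem hcv hA hC
        | exact mid_mem hcv hB hC)

lemma diam_subdiv (S : Tri2) (d : ℕ) :
    Metric.diam (triSet (subdiv S d)) ≤ 2⁻¹ * Metric.diam (triSet S) := by
  obtain ⟨p, r, hr, heq⟩ := triSet_subdiv_eq S d
  rw [heq]
  apply Metric.diam_le_of_forall_dist_le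
    (by positivity)
  rintro _ ⟨y, hy, rfl⟩ _ ⟨z, hz, rfl⟩
  have hd : dist (p + r • y) (p + r • z) = |r| * dist y z := by
    simp only [dist_eq_norm]
    rw [show p + r • y - (p + r • z) = r • (y - z) by module, norm_smul]
    rfl
  rw [hd, hr]
  gcongr
  exact Metric.dist_le_diam_of_mem (tri_compact S.1 S.2.1 S.2.2).isBounded hy hz

end RiemannAux2

open MeasureTheory Filter Pointwise ENNReal

noncomputable section RiemannAux3

lemma subdivAt_subset (T : Tri2) (k i : ℕ) : triSet (subdivAt T k i) ⊆ triSet T := by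
  induction k generalizing i with
  | zero => exact subset_rfl
  | succ k ih =>
    calc triSet (subdivAt T (k+1) i) = triSet (subdiv (subdivAt T k (i/4)) (i%4)) := rfl
    _ ⊆ triSet (subdivAt T k (i/4)) := subdiv_subset _ _
    _ ⊆ triSet T := ih _

lemma volume_subdivAt (T : Tri2) (k i : ℕ) :
    volume (triSet (subdivAt T k i)) = ((4 : ℝ≥0∞)⁻¹) ^ k * volume (triSet T) := by
  induction k generalizing i with
  | zero => simp [subdivAt]
  | succ k ih =>
    have : triSet (subdivAt T (k+1) i) = triSet (subdiv (subdivAt T k (i/4)) (i%4)) := rfl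
    rw [this, volume_triSet_subdiv, ih, pow_succ]
    ring

lemma diam_subdivAt (T : Tri2) (k i : ℕ) :
    Metric.diam (triSet (subdivAt T k i)) ≤ (2⁻¹ : ℝ) ^ k * Metric.diam (triSet T) := by
  induction k generalizing i with
  | zero => simp [subdivAt]
  | succ k ih =>
    calc Metric.diam (triSet (subdivAt T (k+1) i))
        = Metric.diam (triSet (subdiv (subdivAt T k (i/4)) (i%4))) := rfl
      _ ≤ 2⁻¹ * Metric.diam (triSet (subdivAt T k (i/4))) := diam_subdiv _ _
      _ ≤ 2⁻¹ * ((2⁻¹ : ℝ) ^ k * Metric.diam (triSet T)) :=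
          mul_le_mul_of_nonneg_left (ih _) (by norm_num)
      _ = (2⁻¹ : ℝ) ^ (k+1) * Metric.diam (triSet T) := by ring

lemma subdiv_cover (S : Tri2) {y : Pt} (hy : y ∈ triSet S) :
    ∃ d < 4, y ∈ triSet (subdiv S d) := by
  obtain ⟨A, B, C⟩ := S
  obtain ⟨a, b, c, ha, hb, hc, habc, rfl⟩ := mem_triangle_iff.1 hy
  by_cases ha2 : 2⁻¹ ≤ a
  · refine ⟨1, by norm_num, ?_⟩
    show _ ∈ triangle A (mid A B) (mid A C)
    rw [mem_triangle_iff]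
    exact ⟨2*a - 1, 2*b, 2*c, by linarith, by linarith, by linarith, by linarith,
      by rw [show a = 1 - b - c by linarith]; unfold mid; module⟩
  · by_cases hb2 : 2⁻¹ ≤ b
    · refine ⟨2, by norm_num, ?_⟩
      show _ ∈ triangle (mid A B) B (mid B C)
      rw [mem_triangle_iff]
      exact ⟨2*a, 2*b - 1, 2*c, by linarith, by linarith, by linarith, by linarith,
        by rw [show a = 1 - b - c by linarith]; unfold mid; module⟩
    · by_cases hc2 : 2⁻¹ ≤ c
      · refine ⟨3, by norm_num, ?_⟩
        show _ ∈ triangle (mid A C) (mid B C) C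
        rw [mem_triangle_iff]
        exact ⟨2*a, 2*b, 2*c - 1, by linarith, by linarith, by linarith, by linarith,
          by rw [show a = 1 - b - c by linarith]; unfold mid; module⟩
      · refine ⟨0, by norm_num, ?_⟩
        show _ ∈ triangle (mid B C) (mid A C) (mid A B)
        rw [mem_triangle_iff]
        exact ⟨1 - 2*a, 1 - 2*b, 1 - 2*c, by linarith, by linarith, by linarith, by linarith,
          by rw [show a = 1 - b - c by linarith]; unfold mid; module⟩

lemma subdivAt_cover (T : Tri2) (k : ℕ) {y : Pt} (hy : y ∈ triSet T) :
    ∃ i < 4^k, y ∈ triSet (subdivAt T k i) := by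
  induction k with
  | zero => exact ⟨0, by norm_num, hy⟩
  | succ k ih =>
    obtain ⟨j, hj, hjy⟩ := ih
    obtain ⟨d, hd, hdy⟩ := subdiv_cover _ hjy
    refine ⟨4*j + d, ?_, ?_⟩
    · calc 4*j + d < 4*j + 4 := by omega
        _ = 4*(j+1) := by ring
        _ ≤ 4*4^k := by omega
        _ = 4^(k+1) := by ring
    · show y ∈ triSet (subdiv (subdivAt T k ((4*j+d)/4)) ((4*j+d)%4))
      have h1 : (4*j+d)/4 = j := by omega
      have h2 : (4*j+d)%4 = d := by omega
      rw [h1, h2]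
      exact hdy

lemma tri_vol_lt_top (A B C : Pt) : volume (triangle A B C) < ⊤ :=
  (tri_compact A B C).measure_lt_top

lemma tri_vol_pos {A B C : Pt} (h : Nondeg A B C) : 0 < volume (triangle A B C) := by
  have hai : AffineIndependent ℝ ![A, B, C] := affineIndependent_iff_not_collinear_set.2 h
  have hrange : Set.range ![A, B, C] = {A, B, C} := by
    simp only [Matrix.range_cons, Matrix.range_empty, Set.union_empty, Set.union_singleton]
    ext y
    simp only [Set.union_singleton, Set.mem_insert_iff, Set.mem_singleton_iff, Set.mem_union]
    tauto
  have hcard : Fintype.card (Fin 3) = Module.finrank ℝ Pt + 1 := by simp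
  have hspan : affineSpan ℝ ({A, B, C} : Set Pt) = ⊤ := by
    rw [← hrange]
    exact hai.affineSpan_eq_top_iff_card_eq_finrank_add_one.2 hcard
  have hconv : Convex ℝ (triangle A B C) := tri_convex A B C
  have hint : (interior (triangle A B C)).Nonempty := by
    rw [hconv.interior_nonempty_iff_affineSpan_eq_top, triangle, affineSpan_convexHull]
    exact hspan
  exact MeasureTheory.Measure.measure_pos_of_nonempty_interior _ hint

end RiemannAux3

open MeasureTheory Filter Pointwise ENNReal Topology

/-- a bounded function on a nondegenerate closed triangle that is
continuous at Lebesgue-almost every point of the triangle is Riemann integrable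
in the triangular-subdivision sense. -/
theorem riemann_of_ae_continuous (T : Tri2) (h : Nondeg T.1 T.2.1 T.2.2)
    (f : Pt → ℝ) (Mb : ℝ) (hb : ∀ x ∈ triSet T, |f x| ≤ Mb)
    (hcont : ∀ᵐ x ∂(volume.restrict (triSet T)), ContinuousWithinAt f (triSet T) x) :
    ∃ μ : ℝ, RiemannMean T f μ := by
  classical
  have hΩmeas : MeasurableSet (triSet T) := (tri_closed T.1 T.2.1 T.2.2).measurableSet
  have hΩlt : volume (triSet T) < ⊤ := tri_vol_lt_top _ _ _
  have hΩpos : (0 : ℝ≥0∞) < volume (triSet T) := tri_vol_pos h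
  have hvolpos : 0 < vol (triSet T) := ENNReal.toReal_pos hΩpos.ne' hΩlt.ne
  haveI : IsFiniteMeasure (volume.restrict (triSet T)) :=
    ⟨by rw [Measure.restrict_apply_univ]; exact hΩlt⟩
  set Tk : ℕ → ℕ → Set Pt := fun k i => triSet (subdivAt T k i) with hTkdef
  have hTmeas : ∀ k i, MeasurableSet (Tk k i) := fun k i => (tri_closed _ _ _).measurableSet
  have hTsub : ∀ k i, Tk k i ⊆ triSet T := fun k i => subdivAt_subset T k i
  set Ck : ℕ → ℕ → Set Pt := fun k i => Tk k i \ ⋃ j ∈ Finset.range i, Tk k j with hCkdef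
  have hCmeas : ∀ k i, MeasurableSet (Ck k i) :=
    fun k i => (hTmeas k i).diff (Finset.measurableSet_biUnion _ fun j _ => hTmeas k j)
  have hCsub : ∀ k i, Ck k i ⊆ Tk k i := fun k i => Set.diff_subset
  -- unique cell containing a given point
  have hfind : ∀ k, ∀ y ∈ triSet T, ∃ i < 4^k, y ∈ Ck k i ∧ ∀ j, j ≠ i → y ∉ Ck k j := by
    intro k y hy
    obtain ⟨i0, hi0lt, hi0⟩ := subdivAt_cover T k hy
    have hex : ∃ i, y ∈ Tk k i := ⟨i0, hi0⟩
    have hmlt : Nat.find hex < 4^k := lt_of_le_of_lt (Nat.find_min' hex hi0) hi0lt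
    refine ⟨Nat.find hex, hmlt, ⟨Nat.find_spec hex, ?_⟩, ?_⟩
    · intro hmem
      obtain ⟨j, hj, hyj⟩ := Set.mem_iUnion₂.1 hmem
      exact Nat.find_min hex (Finset.mem_range.1 hj) hyj
    · intro j hj hyj
      rcases lt_trichotomy j (Nat.find hex) with hlt | heq | hgt
      · exact Nat.find_min hex hlt (hCsub k j hyj)
      · exact hj heq
      · exact hyj.2 (Set.mem_iUnion₂.2 ⟨Nat.find hex, Finset.mem_range.2 hgt, Nat.find_spec hex⟩)
  -- disjointness
  have hdisj : ∀ k i j, i < j → Disjoint (Ck k i) (Ck k j) := by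
    intro k i j hij
    rw [Set.disjoint_left]
    intro y hyi hyj
    exact hyj.2 (Set.mem_iUnion₂.2 ⟨i, Finset.mem_range.2 hij, hCsub k i hyi⟩)
  -- cells cover the triangle and their measures are all equal
  have hCvol : ∀ k, ∀ i ∈ Finset.range (4^k),
      (volume (Ck k i)).toReal = vol (triSet T) / 4^k := by
    intro k
    have hUnion : ⋃ i ∈ Finset.range (4^k), Ck k i = triSet T := by
      apply Set.Subset.antisymm
      · refine Set.iUnion₂_subset fun i _ => (hCsub k i).trans (hTsub k i)
      · intro y hy
        obtain ⟨i, hilt, hyC, -⟩ := hfind k y hy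
        exact Set.mem_iUnion₂.2 ⟨i, Finset.mem_range.2 hilt, hyC⟩
    have hsum : ∑ i ∈ Finset.range (4^k), volume (Ck k i) = volume (triSet T) := by
      rw [← measure_biUnion_finset ?_ (fun i _ => hCmeas k i), hUnion]
      intro i hi j hj hij
      rcases lt_or_gt_of_ne hij with hlt | hgt
      · exact hdisj k i j hlt
      · exact (hdisj k j i hgt).symm
    have hble : ∀ i, volume (Ck k i) ≤ (4 : ℝ≥0∞)⁻¹ ^ k * volume (triSet T) := by
      intro i
      calc volume (Ck k i) ≤ volume (Tk k i) := measure_mono (hCsub k i)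
        _ = (4 : ℝ≥0∞)⁻¹ ^ k * volume (triSet T) := volume_subdivAt T k i
    have hbfin : (4 : ℝ≥0∞)⁻¹ ^ k * volume (triSet T) ≠ ⊤ :=
      (ENNReal.mul_lt_top (by simp [ENNReal.inv_lt_top, pow_lt_top]) hΩlt).ne
    have hCfin : ∀ i, volume (Ck k i) ≠ ⊤ := fun i => (lt_of_le_of_lt (hble i) hbfin.lt_top).ne
    have hbtoReal : ((4 : ℝ≥0∞)⁻¹ ^ k * volume (triSet T)).toReal = vol (triSet T) / 4^k := by
      rw [ENNReal.toReal_mul, ENNReal.toReal_pow, ENNReal.toReal_inv]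
      simp [vol, div_eq_mul_inv, inv_pow, mul_comm]
    have hsumR : ∑ i ∈ Finset.range (4^k), (volume (Ck k i)).toReal = vol (triSet T) := by
      rw [← ENNReal.toReal_sum (fun i _ => hCfin i), hsum]; rfl
    have hleR : ∀ i ∈ Finset.range (4^k),
        (volume (Ck k i)).toReal ≤ vol (triSet T) / 4^k := by
      intro i _
      rw [← hbtoReal]
      exact ENNReal.toReal_mono hbfin (hble i)
    intro i hi
    by_contra hne
    have hlt : (volume (Ck k i)).toReal < vol (triSet T) / 4^k := lt_of_le_of_ne (hleR i hi) hne
    have hstrict := Finset.sum_lt_sum hleR ⟨i, hi, hlt⟩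
    rw [hsumR, Finset.sum_const, Finset.card_range, nsmul_eq_mul] at hstrict
    have hcast : ((4^k : ℕ) : ℝ) * (vol (triSet T) / 4^k) = vol (triSet T) := by
      push_cast
      field_simp
    rw [hcast] at hstrict
    exact lt_irrefl _ hstrict
  -- the Riemann mean
  refine ⟨(vol (triSet T))⁻¹ * ∫ y, f y ∂(volume.restrict (triSet T)), ?_⟩
  intro x hx
  set F : ℕ → Pt → ℝ :=
    fun k y => ∑ i ∈ Finset.range (4^k), (Ck k i).indicator (fun _ => f (x k i)) y with hFdef
  -- value of F on each cell
  have hvalue : ∀ k, ∀ y ∈ triSet T, ∃ i, i < 4^k ∧ y ∈ Ck k i ∧ F k y = f (x k i) := by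
    intro k y hy
    obtain ⟨i, hilt, hyC, huniq⟩ := hfind k y hy
    refine ⟨i, hilt, hyC, ?_⟩
    simp only [hFdef]
    rw [Finset.sum_eq_single_of_mem i (Finset.mem_range.2 hilt)]
    · exact Set.indicator_of_mem hyC _
    · intro j _ hj
      exact Set.indicator_of_notMem (huniq j hj) _
  have hFmeas : ∀ k, AEStronglyMeasurable (F k) (volume.restrict (triSet T)) := by
    intro k
    exact (Finset.measurable_sum _ fun i _ =>
      (measurable_const.indicator (hCmeas k i))).aestronglyMeasurable
  have hFintegrable : ∀ k i, Integrable ((Ck k i).indicator (fun _ => f (x k i)))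
      (volume.restrict (triSet T)) :=
    fun k i => (integrable_const _).indicator (hCmeas k i)
  -- integral of F
  have hFint : ∀ k, ∫ y, F k y ∂(volume.restrict (triSet T)) =
      (∑ i ∈ Finset.range (4^k), f (x k i)) * (vol (triSet T) / 4^k) := by
    intro k
    simp only [hFdef]
    rw [integral_finset_sum _ (fun i _ => hFintegrable k i)]
    rw [Finset.sum_mul]
    apply Finset.sum_congr rfl
    intro i hi
    rw [integral_indicator_const _ (hCmeas k i), measureReal_restrict_apply (hCmeas k i),
      Set.inter_eq_self_of_subset_left ((hCsub k i).trans (hTsub k i)), measureReal_def, smul_eq_mul,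
      hCvol k i hi, mul_comm]
  -- domination
  have hbound : ∀ k, ∀ᵐ y ∂(volume.restrict (triSet T)), ‖F k y‖ ≤ Mb := by
    intro k
    filter_upwards [ae_restrict_mem hΩmeas] with y hy
    obtain ⟨i, hilt, -, hFy⟩ := hvalue k y hy
    rw [hFy, Real.norm_eq_abs]
    exact hb _ (hTsub k i (hx k i hilt))
  -- pointwise convergence
  have hlim : ∀ᵐ y ∂(volume.restrict (triSet T)),
      Tendsto (fun k => F k y) atTop (nhds (f y)) := by
    filter_upwards [hcont, ae_restrict_mem hΩmeas] with y hyc hy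
    choose i hilt hiC hiF using fun k => hvalue k y hy
    have hdist : ∀ k, dist (x k (i k)) y ≤ (2⁻¹:ℝ)^k * Metric.diam (triSet T) := by
      intro k
      calc dist (x k (i k)) y
          ≤ Metric.diam (Tk k (i k)) :=
            Metric.dist_le_diam_of_mem
              (tri_compact (subdivAt T k (i k)).1 (subdivAt T k (i k)).2.1
                (subdivAt T k (i k)).2.2).isBounded
              (hx k (i k) (hilt k)) (hCsub k (i k) (hiC k))
        _ ≤ (2⁻¹:ℝ)^k * Metric.diam (triSet T) := diam_subdivAt T k (i k)
    have htend0 : Tendsto (fun k => (2⁻¹:ℝ)^k * Metric.diam (triSet T)) atTop (nhds 0) := by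
      have := (tendsto_pow_atTop_nhds_zero_of_lt_one (by norm_num : (0:ℝ) ≤ 2⁻¹)
        (by norm_num : (2⁻¹:ℝ) < 1)).mul_const (Metric.diam (triSet T))
      simpa using this
    have hx_tend : Tendsto (fun k => x k (i k)) atTop (nhds y) := by
      apply tendsto_iff_dist_tendsto_zero.2
      exact squeeze_zero (fun k => dist_nonneg) hdist htend0
    have hx_tendW : Tendsto (fun k => x k (i k)) atTop (nhdsWithin y (triSet T)) := by
      rw [tendsto_nhdsWithin_iff]
      exact ⟨hx_tend, Filter.Eventually.of_forall fun k => hTsub k (i k) (hx k (i k) (hilt k))⟩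
    have := hyc.tendsto.comp hx_tendW
    apply Tendsto.congr _ this
    intro k
    exact (hiF k).symm
  -- dominated convergence
  have hDCT := tendsto_integral_of_dominated_convergence (fun _ => Mb) hFmeas
    (integrable_const Mb) hbound hlim
  have hconv := hDCT.const_mul (vol (triSet T))⁻¹
  apply Tendsto.congr _ hconv
  intro k
  rw [hFint k]
  have h4k : ((4:ℝ)^k) ≠ 0 := by positivity
  field_simp
end

section
/- Let Ω ⊂ ℝ² be a nondegenerate closed triangle of unit area, let k ≥ 0, N = 4^k, and let T_1,…,T_N be the standard level-k subdivision of Ω. Let f : Ω → ℝ be Lipschitz with constant L, and let X_1,…,X_N be independent random points with X_i uniformly distributed on T_i. Then the estimator (1/N)·Σ_{i=1}^{N} f(X_i) is unbiased for ∫_Ω f(x)dx, and E[((1/N)·Σ_{i=1}^{N} f(X_i) − ∫_Ω f(x)dx)²] ≤ L²·diam(Ω)²/N², where diam(Ω) is the diameter of Ω; in particular the mean squared error is O(1/N²). -/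
open MeasureTheory Filter Real

open Set Metric Bornology
open scoped NNReal ENNReal

lemma aux_mem_triangle {A B C x : Pt} :
    x ∈ triangle A B C ↔ ∃ α β γ : ℝ, 0 ≤ α ∧ 0 ≤ β ∧ 0 ≤ γ ∧ α + β + γ = 1 ∧
      x = α • A + β • B + γ • C := by
  constructor
  · intro hx
    rw [triangle, convexHull_insert (by simp), convexHull_pair, mem_convexJoin] at hx
    obtain ⟨a, ha, y, hy, hxy⟩ := hx
    rw [Set.mem_singleton_iff] at ha
    subst ha
    obtain ⟨b, c, hb, hc, hbc, rfl⟩ := hy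
    obtain ⟨a, a', ha, ha', haa, rfl⟩ := hxy
    exact ⟨a, a' * b, a' * c, ha, by positivity, by positivity, by nlinarith, by module⟩
  · rintro ⟨α, β, γ, hα, hβ, hγ, hsum, rfl⟩
    rw [triangle, convexHull_insert (by simp), convexHull_pair, mem_convexJoin]
    by_cases hs : β + γ = 0
    · have hβ0 : β = 0 := by linarith
      have hγ0 : γ = 0 := by linarith
      refine ⟨A, Set.mem_singleton _, B, ⟨1, 0, by norm_num, by norm_num, by norm_num, by module⟩,
        ⟨α, 1 - α, hα, by simp [hβ0, hγ0] at hsum; linarith, by ring, ?_⟩⟩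
      rw [hβ0, hγ0]
      have : α = 1 := by linarith
      rw [this]; module
    · have hspos : 0 < β + γ := lt_of_le_of_ne (by linarith) (Ne.symm hs)
      refine ⟨A, Set.mem_singleton _, (β / (β + γ)) • B + (γ / (β + γ)) • C,
        ⟨β / (β + γ), γ / (β + γ), by positivity, by positivity, by field_simp, rfl⟩,
        ⟨α, β + γ, hα, le_of_lt hspos, by linarith, ?_⟩⟩
    -- α • A + (β+γ) • ((β/(β+γ)) • B + (γ/(β+γ)) • C) = α • A + β • B + γ • C
      rw [smul_add, smul_smul, smul_smul, mul_div_cancel₀ _ hs, mul_div_cancel₀ _ hs]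
      module

lemma aux_triSet_eq (a b c : Pt) : triSet (a, b, c) = triangle a b c := rfl

lemma aux_subdiv_homothety (T : Tri2) (d : ℕ) :
    ∃ c : Pt, ∃ r : ℝ, |r| = 1/2 ∧
      triSet (subdiv T d) = AffineMap.homothety c r '' triSet T := by
  obtain ⟨A, B, C⟩ := T
  have him : ∀ (c : Pt) (r : ℝ) (X Y Z : Pt), AffineMap.homothety c r A = X →
      AffineMap.homothety c r B = Y → AffineMap.homothety c r C = Z →
      AffineMap.homothety c r '' triangle A B C = triangle X Y Z := by
    rintro c r X Y Z rfl rfl rfl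
    rw [triangle, triangle, AffineMap.image_convexHull]
    congr 1
    simp [Set.image_insert_eq]
  unfold subdiv
  split_ifs with h0 h1 h2
  · exact ⟨(3⁻¹ : ℝ) • (A + B + C), -(1/2), by norm_num, (him _ _ _ _ _
      (by simp only [AffineMap.homothety_apply, vsub_eq_sub, vadd_eq_add]; unfold mid; module)
      (by simp only [AffineMap.homothety_apply, vsub_eq_sub, vadd_eq_add]; unfold mid; module)
      (by simp only [AffineMap.homothety_apply, vsub_eq_sub, vadd_eq_add]; unfold mid; module)).symm⟩
  · exact ⟨A, 1/2, by norm_num, (him _ _ _ _ _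
      (by simp only [AffineMap.homothety_apply, vsub_eq_sub, vadd_eq_add]; module)
      (by simp only [AffineMap.homothety_apply, vsub_eq_sub, vadd_eq_add]; unfold mid; module)
      (by simp only [AffineMap.homothety_apply, vsub_eq_sub, vadd_eq_add]; unfold mid; module)).symm⟩
  · exact ⟨B, 1/2, by norm_num, (him _ _ _ _ _
      (by simp only [AffineMap.homothety_apply, vsub_eq_sub, vadd_eq_add]; unfold mid; module)
      (by simp only [AffineMap.homothety_apply, vsub_eq_sub, vadd_eq_add]; module)
      (by simp only [AffineMap.homothety_apply, vsub_eq_sub, vadd_eq_add]; unfold mid; module)).symm⟩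
  · exact ⟨C, 1/2, by norm_num, (him _ _ _ _ _
      (by simp only [AffineMap.homothety_apply, vsub_eq_sub, vadd_eq_add]; unfold mid; module)
      (by simp only [AffineMap.homothety_apply, vsub_eq_sub, vadd_eq_add]; unfold mid; module)
      (by simp only [AffineMap.homothety_apply, vsub_eq_sub, vadd_eq_add]; module)).symm⟩

lemma aux_tri_compact (T : Tri2) : IsCompact (triSet T) := by
  obtain ⟨A, B, C⟩ := T
  exact (Set.toFinite ({A, B, C} : Set Pt)).isCompact_convexHull ℝ

lemma aux_tri_meas (T : Tri2) : MeasurableSet (triSet T) :=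
  (aux_tri_compact T).isClosed.measurableSet

lemma aux_vol_subdiv (T : Tri2) (d : ℕ) :
    volume (triSet (subdiv T d)) = (4:ℝ≥0∞)⁻¹ * volume (triSet T) := by
  obtain ⟨c, r, hr, heq⟩ := aux_subdiv_homothety T d
  rw [heq, MeasureTheory.Measure.addHaar_image_homothety]
  have : |r ^ Module.finrank ℝ Pt| = 1/4 := by
    have : Module.finrank ℝ Pt = 2 := by simp
    rw [this, abs_pow, hr]; norm_num
  rw [this]
  congr 1
  rw [show (1:ℝ)/4 = (4:ℝ)⁻¹ by norm_num, ENNReal.ofReal_inv_of_pos (by norm_num)]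
  norm_num

lemma aux_diam_subdiv (T : Tri2) (d : ℕ) :
    diam (triSet (subdiv T d)) ≤ diam (triSet T) / 2 := by
  obtain ⟨c, r, hr, heq⟩ := aux_subdiv_homothety T d
  have hlip : LipschitzWith (1/2 : ℝ≥0) (AffineMap.homothety c r) := by
    apply LipschitzWith.of_dist_le_mul
    intro x y
    simp only [AffineMap.homothety_apply, vsub_eq_sub, vadd_eq_add, dist_eq_norm]
    rw [show r • (x - c) + c - (r • (y - c) + c) = r • (x - y) by module, norm_smul,
      Real.norm_eq_abs, hr]
    push_cast
    norm_num
  rw [heq]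
  calc diam (AffineMap.homothety c r '' triSet T)
      ≤ (1/2 : ℝ≥0) * diam (triSet T) :=
        hlip.diam_image_le _ (aux_tri_compact T).isBounded
    _ = diam (triSet T) / 2 := by norm_num; ring

lemma aux_subdiv_subset (T : Tri2) (d : ℕ) :
    triSet (subdiv T d) ⊆ triSet T := by
  obtain ⟨A, B, C⟩ := T
  rw [aux_triSet_eq]
  have hA : A ∈ triangle A B C :=
    aux_mem_triangle.mpr ⟨1, 0, 0, by norm_num, by norm_num, by norm_num, by norm_num, by module⟩
  have hB : B ∈ triangle A B C :=
    aux_mem_triangle.mpr ⟨0, 1, 0, by norm_num, by norm_num, by norm_num, by norm_num, by module⟩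
  have hC : C ∈ triangle A B C :=
    aux_mem_triangle.mpr ⟨0, 0, 1, by norm_num, by norm_num, by norm_num, by norm_num, by module⟩
  have hAB : mid A B ∈ triangle A B C := aux_mem_triangle.mpr
    ⟨1/2, 1/2, 0, by norm_num, by norm_num, by norm_num, by norm_num, by unfold mid; module⟩
  have hAC : mid A C ∈ triangle A B C := aux_mem_triangle.mpr
    ⟨1/2, 0, 1/2, by norm_num, by norm_num, by norm_num, by norm_num, by unfold mid; module⟩
  have hBC : mid B C ∈ triangle A B C := aux_mem_triangle.mpr
    ⟨0, 1/2, 1/2, by norm_num, by norm_num, by norm_num, by norm_num, by unfold mid; module⟩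
  have hcvx : Convex ℝ (triangle A B C) := convex_convexHull ℝ _
  unfold subdiv
  split_ifs
  · show convexHull ℝ {mid B C, mid A C, mid A B} ⊆ triangle A B C
    refine convexHull_min ?_ hcvx
    simp only [Set.insert_subset_iff, Set.singleton_subset_iff]
    exact ⟨hBC, hAC, hAB⟩
  · show convexHull ℝ {A, mid A B, mid A C} ⊆ triangle A B C
    refine convexHull_min ?_ hcvx
    simp only [Set.insert_subset_iff, Set.singleton_subset_iff]
    exact ⟨hA, hAB, hAC⟩
  · show convexHull ℝ {mid A B, B, mid B C} ⊆ triangle A B C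
    refine convexHull_min ?_ hcvx
    simp only [Set.insert_subset_iff, Set.singleton_subset_iff]
    exact ⟨hAB, hB, hBC⟩
  · show convexHull ℝ {mid A C, mid B C, C} ⊆ triangle A B C
    refine convexHull_min ?_ hcvx
    simp only [Set.insert_subset_iff, Set.singleton_subset_iff]
    exact ⟨hAC, hBC, hC⟩

lemma aux_cover (T : Tri2) (x : Pt) (hx : x ∈ triSet T) :
    ∃ d < 4, x ∈ triSet (subdiv T d) := by
  obtain ⟨A, B, C⟩ := T
  rw [aux_triSet_eq] at hx
  obtain ⟨α, β, γ, hα, hβ, hγ, hsum, rfl⟩ := aux_mem_triangle.mp hx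
  have hα' : α = 1 - β - γ := by linarith
  subst hα'
  rcases le_or_gt (1/2 : ℝ) (1 - β - γ) with h1 | h1
  · refine ⟨1, by norm_num, ?_⟩
    show _ ∈ triSet (A, mid A B, mid A C)
    rw [aux_triSet_eq]
    exact aux_mem_triangle.mpr ⟨2 * (1-β-γ) - 1, 2*β, 2*γ, by linarith, by linarith,
      by linarith, by ring, by unfold mid; module⟩
  rcases le_or_gt (1/2 : ℝ) β with h2 | h2
  · refine ⟨2, by norm_num, ?_⟩
    show _ ∈ triSet (mid A B, B, mid B C)
    rw [aux_triSet_eq]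
    exact aux_mem_triangle.mpr ⟨2 * (1-β-γ) , 2*β - 1, 2*γ, by linarith, by linarith,
      by linarith, by ring, by unfold mid; module⟩
  rcases le_or_gt (1/2 : ℝ) γ with h3 | h3
  · refine ⟨3, by norm_num, ?_⟩
    show _ ∈ triSet (mid A C, mid B C, C)
    rw [aux_triSet_eq]
    exact aux_mem_triangle.mpr ⟨2 * (1-β-γ) , 2*β, 2*γ - 1, by linarith, by linarith,
      by linarith, by ring, by unfold mid; module⟩
  · refine ⟨0, by norm_num, ?_⟩
    show _ ∈ triSet (mid B C, mid A C, mid A B)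
    rw [aux_triSet_eq]
    exact aux_mem_triangle.mpr ⟨1 - 2*(1-β-γ), 1 - 2*β, 1 - 2*γ, by linarith, by linarith,
      by linarith, by ring, by unfold mid; module⟩


lemma aux_vol_subdivAt (T : Tri2) (k : ℕ) (i : ℕ) :
    volume (triSet (subdivAt T k i)) = ((4:ℝ≥0∞)⁻¹)^k * volume (triSet T) := by
  induction k generalizing i with
  | zero => simp [subdivAt]
  | succ k ih =>
      show volume (triSet (subdiv (subdivAt T k (i / 4)) (i % 4))) = _
      rw [aux_vol_subdiv, ih]
      ring

lemma aux_diam_subdivAt (T : Tri2) (k : ℕ) (i : ℕ) :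
    Metric.diam (triSet (subdivAt T k i)) ≤ Metric.diam (triSet T) / 2^k := by
  induction k generalizing i with
  | zero => simp [subdivAt]
  | succ k ih =>
      calc Metric.diam (triSet (subdiv (subdivAt T k (i / 4)) (i % 4)))
          ≤ Metric.diam (triSet (subdivAt T k (i / 4))) / 2 := aux_diam_subdiv _ _
        _ ≤ (Metric.diam (triSet T) / 2^k) / 2 := by
            have := ih (i / 4); linarith
        _ = Metric.diam (triSet T) / 2^(k+1) := by ring

lemma aux_subdivAt_subset (T : Tri2) (k : ℕ) (i : ℕ) :
    triSet (subdivAt T k i) ⊆ triSet T := by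
  induction k generalizing i with
  | zero => exact subset_rfl
  | succ k ih =>
      exact (aux_subdiv_subset _ _).trans (ih (i / 4))

lemma aux_integral_subdiv (T : Tri2) (g : Pt → ℝ) (hg : Continuous g) :
    ∫ x in triSet T, g x = ∑ d ∈ Finset.range 4, ∫ x in triSet (subdiv T d), g x := by
  set t := triSet T with ht
  set s : ℕ → Set Pt := fun d => triSet (subdiv T d) with hsdef
  have hms : ∀ d, MeasurableSet (s d) := fun d => aux_tri_meas _
  have hmt : MeasurableSet t := aux_tri_meas _
  have hsub : ∀ d, s d ⊆ t := fun d => aux_subdiv_subset T d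
  have hfin : volume t < ⊤ := (aux_tri_compact T).measure_lt_top
  have hfins : ∀ d, volume (s d) < ⊤ := fun d => lt_of_le_of_lt (measure_mono (hsub d)) hfin
  -- the multiplicity function
  set h : Pt → ℝ := fun x =>
    (∑ d ∈ Finset.range 4, (s d).indicator (1 : Pt → ℝ) x) - t.indicator 1 x with hh
  have hnonneg : 0 ≤ h := by
    intro x
    by_cases hxt : x ∈ t
    · obtain ⟨d, hd4, hxd⟩ := aux_cover T x hxt
      have h1 : (1:ℝ) ≤ ∑ d ∈ Finset.range 4, (s d).indicator (1 : Pt → ℝ) x := by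
        have : (s d).indicator (1 : Pt → ℝ) x = 1 := by rw [Set.indicator_of_mem hxd]; rfl
        rw [← this]
        apply Finset.single_le_sum (f := fun d => (s d).indicator (1 : Pt → ℝ) x)
          (fun e _ => Set.indicator_nonneg (by intro _ _; norm_num) x)
          (Finset.mem_range.mpr hd4)
      simp only [hh, Pi.zero_apply, Set.indicator_of_mem hxt, Pi.one_apply]
      linarith
    · have : ∀ d, x ∉ s d := fun d hxd => hxt (hsub d hxd)
      simp [hh, Set.indicator_of_notMem hxt, Set.indicator_of_notMem (this _)]
  have hint_ind : ∀ d, Integrable ((s d).indicator (1 : Pt → ℝ)) volume := by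
    intro d
    rw [integrable_indicator_iff (hms d)]
    exact (integrableOn_const_iff).mpr (Or.inr (hfins d))
  have hint_t : Integrable (t.indicator (1 : Pt → ℝ)) volume := by
    rw [integrable_indicator_iff hmt]
    exact (integrableOn_const_iff).mpr (Or.inr hfin)
  have hinth : Integrable h volume :=
    ((integrable_finset_sum _ (fun d _ => hint_ind d)).sub hint_t)
  have hinth0 : ∫ x, h x = 0 := by
    rw [hh]
    simp only
    rw [integral_sub (integrable_finset_sum _ (fun d _ => hint_ind d)) hint_t,
      integral_finset_sum _ (fun d _ => hint_ind d)]
    have hv : ∀ d ∈ Finset.range 4, ∫ x, (s d).indicator (1 : Pt → ℝ) x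
        = (4:ℝ)⁻¹ * (volume t).toReal := by
      intro d _
      rw [MeasureTheory.integral_indicator_one (hms d), hsdef]
      simp only [Measure.real, aux_vol_subdiv]
      rw [ENNReal.toReal_mul]
      norm_num
      rfl
    rw [Finset.sum_congr rfl hv, MeasureTheory.integral_indicator_one hmt]
    simp [Measure.real]
  have hae : h =ᵐ[volume] 0 :=
    (integral_eq_zero_iff_of_nonneg hnonneg hinth).mp hinth0
  -- now conclude
  have hgint : ∀ d, Integrable ((s d).indicator g) volume := by
    intro d
    rw [integrable_indicator_iff (hms d)]
    exact hg.continuousOn.integrableOn_compact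
      (by rw [hsdef]; exact aux_tri_compact _)
  have hgt : Integrable (t.indicator g) volume := by
    rw [integrable_indicator_iff hmt]
    exact hg.continuousOn.integrableOn_compact (aux_tri_compact _)
  have key : ∫ x, (∑ d ∈ Finset.range 4, (s d).indicator g x - t.indicator g x) = 0 := by
    have : (fun x => ∑ d ∈ Finset.range 4, (s d).indicator g x - t.indicator g x)
        =ᵐ[volume] 0 := by
      filter_upwards [hae] with x hx
      have hx' : (∑ d ∈ Finset.range 4, (s d).indicator (1 : Pt → ℝ) x) - t.indicator 1 x = 0 := hx
      have expand : ∀ u : Set Pt, u.indicator g x = g x * u.indicator (1 : Pt → ℝ) x := by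
        intro u
        by_cases hxu : x ∈ u <;>
          simp [Set.indicator_of_mem, Set.indicator_of_notMem, hxu]
      simp only [expand, ← Finset.mul_sum, Pi.zero_apply]
      linear_combination g x * hx' 
    rw [integral_congr_ae this]
    simp
  rw [integral_sub (integrable_finset_sum _ (fun d _ => hgint d)) hgt,
    integral_finset_sum _ (fun d _ => hgint d)] at key
  have h1 : ∀ d ∈ Finset.range 4, ∫ x, (s d).indicator g x = ∫ x in s d, g x :=
    fun d _ => integral_indicator (hms d)
  have h2 : ∫ x, t.indicator g x = ∫ x in t, g x := integral_indicator hmt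
  rw [Finset.sum_congr rfl h1, h2] at key
  linarith

lemma aux_sum_base4 (k : ℕ) (G : ℕ → ℝ) :
    ∑ i ∈ Finset.range (4^(k+1)), G i
      = ∑ j ∈ Finset.range (4^k), ∑ d ∈ Finset.range 4, G (4*j + d) := by
  rw [← Finset.sum_product']
  apply Finset.sum_nbij' (i := fun i => (i / 4, i % 4)) (j := fun p => 4 * p.1 + p.2)
  · intro a ha
    simp only [Finset.mem_product, Finset.mem_range] at *
    constructor
    · have : a < 4^k * 4 := by rw [← pow_succ]; exact ha
      exact Nat.div_lt_of_lt_mul (by omega)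
    · omega
  · intro p hp
    simp only [Finset.mem_product, Finset.mem_range] at *
    have := hp.1; have := hp.2
    rw [pow_succ]
    omega
  · intro a _; omega
  · intro p hp
    simp only [Finset.mem_product, Finset.mem_range] at hp
    have := hp.2
    ext <;> simp <;> omega
  · intro a _
    simp only
    rw [Nat.div_add_mod]

lemma aux_integral_subdivAt (T : Tri2) (g : Pt → ℝ) (hg : Continuous g) (k : ℕ) :
    ∫ x in triSet T, g x
      = ∑ i ∈ Finset.range (4^k), ∫ x in triSet (subdivAt T k i), g x := by
  induction k with
  | zero => simp [subdivAt]
  | succ k ih =>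
      rw [aux_sum_base4 k (fun i => ∫ x in triSet (subdivAt T (k+1) i), g x)]
      have : ∀ j ∈ Finset.range (4^k),
          ∑ d ∈ Finset.range 4, ∫ x in triSet (subdivAt T (k+1) (4*j + d)), g x
            = ∫ x in triSet (subdivAt T k j), g x := by
        intro j _
        have he : ∀ d ∈ Finset.range 4,
            ∫ x in triSet (subdivAt T (k+1) (4*j + d)), g x
              = ∫ x in triSet (subdiv (subdivAt T k j) d), g x := by
          intro d hd
          simp only [Finset.mem_range] at hd
          have h1 : subdivAt T (k+1) (4*j + d) = subdiv (subdivAt T k j) d := by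
            show subdiv (subdivAt T k ((4*j+d) / 4)) ((4*j+d) % 4) = _
            congr 1
            · congr 1; omega
            · omega
          rw [h1]
        rw [Finset.sum_congr rfl he, ← aux_integral_subdiv _ _ hg]
      rw [Finset.sum_congr rfl this, ← ih]

open ProbabilityTheory in
/-- stratified sampling over the level-`k` subdivision of a unit-area
triangle: with one uniform point per subtriangle, independently, the equal-weight
estimator is unbiased for `∫_Ω f` and its mean squared error is at most
`L²·diam(Ω)²/N²` for an `L`-Lipschitz integrand. -/
theorem stratified_sampling_mse {Ω' : Type*} [MeasurableSpace Ω']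
    (Pm : Measure Ω') [IsProbabilityMeasure Pm]
    (T : Tri2) (h : Nondeg T.1 T.2.1 T.2.2) (hvol : vol (triSet T) = 1)
    (k : ℕ) (f : Pt → ℝ) (L : ℝ) (hL : 0 ≤ L)
    (hf : ∀ x ∈ triSet T, ∀ y ∈ triSet T, |f x - f y| ≤ L * dist x y)
    (X : Fin (4 ^ k) → Ω' → Pt) (hXm : ∀ i, Measurable (X i))
    (hindep : iIndepFun X Pm)
    (hlaw : ∀ i : Fin (4 ^ k), Measure.map (X i) Pm =
      (volume (triSet (subdivAt T k (i : ℕ))))⁻¹ •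
        volume.restrict (triSet (subdivAt T k (i : ℕ)))) :
    (∫ ω, (4 ^ k : ℝ)⁻¹ * ∑ i : Fin (4 ^ k), f (X i ω) ∂Pm) = (∫ x in triSet T, f x) ∧
    (∫ ω, ((4 ^ k : ℝ)⁻¹ * ∑ i : Fin (4 ^ k), f (X i ω) - ∫ x in triSet T, f x) ^ 2 ∂Pm)
      ≤ L ^ 2 * Metric.diam (triSet T) ^ 2 / ((4 ^ k : ℝ)) ^ 2 := by
    classical
  have hLip : LipschitzOnWith (Real.toNNReal L) f (triSet T) := by
    apply LipschitzOnWith.of_dist_le_mul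
    intro x hx y hy
    rw [Real.dist_eq, Real.coe_toNNReal L hL]
    exact hf x hx y hy
  obtain ⟨g, hgLip, hfg⟩ := hLip.extend_real
  have hgc : Continuous g := hgLip.continuous
  have hgm : Measurable g := hgc.measurable
  set t := triSet T with htdef
  have htc : IsCompact t := aux_tri_compact T
  have hvol1 : volume t = 1 := (ENNReal.toReal_eq_one_iff _).mp hvol
  have hN0 : (0:ℝ) < (4:ℝ)^k := by positivity
  set ti : Fin (4^k) → Set Pt := fun i => triSet (subdivAt T k (i : ℕ)) with htidef
  have hti_meas : ∀ i, MeasurableSet (ti i) := fun i => aux_tri_meas _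
  have hti_sub : ∀ i, ti i ⊆ t := fun i => aux_subdivAt_subset T k _
  have hti_comp : ∀ i, IsCompact (ti i) := fun i => aux_tri_compact _
  have hvi : ∀ i, volume (ti i) = ((4:ℝ≥0∞)⁻¹)^k := by
    intro i; rw [htidef]; simp only [aux_vol_subdivAt, ← htdef, hvol1, mul_one]
  have hinv4 : (((4:ℝ≥0∞)⁻¹)^k)⁻¹ = (4:ℝ≥0∞)^k := by
    rw [← ENNReal.inv_pow, inv_inv]
  have hlaw' : ∀ i, Measure.map (X i) Pm = ((4:ℝ≥0∞)^k) • volume.restrict (ti i) := by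
    intro i
    rw [hlaw i]
    congr 1
    rw [show volume (triSet (subdivAt T k (i:ℕ))) = volume (ti i) from rfl, hvi i, hinv4]
  have hmem : ∀ i, ∀ᵐ ω ∂Pm, X i ω ∈ ti i := by
    intro i
    rw [ae_iff]
    have he : {ω | ¬ X i ω ∈ ti i} = X i ⁻¹' (ti i)ᶜ := rfl
    rw [he, ← Measure.map_apply (hXm i) (hti_meas i).compl, hlaw' i]
    simp [Measure.restrict_apply (hti_meas i).compl]
  set Y : Fin (4^k) → Ω' → ℝ := fun i => g ∘ X i with hYdef
  have hYm : ∀ i, Measurable (Y i) := fun i => hgm.comp (hXm i)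
  set p : Fin (4^k) → Pt := fun i => (subdivAt T k (i:ℕ)).1 with hpdef
  have hp : ∀ i, p i ∈ ti i := fun i => subset_convexHull ℝ _ (Set.mem_insert _ _)
  set D : ℝ := L * (Metric.diam t / 2^k) with hDdef
  have hdiamnn : 0 ≤ Metric.diam t := Metric.diam_nonneg
  have hD0 : 0 ≤ D := by positivity
  have hbound : ∀ i, ∀ᵐ ω ∂Pm, |Y i ω - g (p i)| ≤ D := by
    intro i
    filter_upwards [hmem i] with ω hω
    have h1 : |g (X i ω) - g (p i)| = |f (X i ω) - f (p i)| := by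
      rw [hfg (hti_sub i hω), hfg (hti_sub i (hp i))]
    calc |Y i ω - g (p i)| = |f (X i ω) - f (p i)| := h1
      _ ≤ L * dist (X i ω) (p i) := hf _ (hti_sub i hω) _ (hti_sub i (hp i))
      _ ≤ L * Metric.diam (ti i) :=
          mul_le_mul_of_nonneg_left
            (Metric.dist_le_diam_of_mem (hti_comp i).isBounded hω (hp i)) hL
      _ ≤ D := mul_le_mul_of_nonneg_left (aux_diam_subdivAt T k _) hL
  have hY2 : ∀ i, MemLp (Y i) 2 Pm := by
    intro i
    refine MemLp.of_bound ((hYm i).aestronglyMeasurable) (|g (p i)| + D) ?_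
    filter_upwards [hbound i] with ω hω
    rw [Real.norm_eq_abs]
    have h2 := abs_sub_abs_le_abs_sub (Y i ω) (g (p i))
    linarith
  have hYint : ∀ i, Integrable (Y i) Pm := fun i => (hY2 i).integrable one_le_two
  have hEY : ∀ i, ∫ ω, Y i ω ∂Pm = (4:ℝ)^k * ∫ x in ti i, g x := by
    intro i
    have h1 : ∫ ω, Y i ω ∂Pm = ∫ x, g x ∂(Measure.map (X i) Pm) :=
      (integral_map (hXm i).aemeasurable hgc.aestronglyMeasurable).symm
    rw [h1, hlaw' i, integral_smul_measure, smul_eq_mul, ENNReal.toReal_pow]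
    norm_num
  have hsum_int : ∑ i : Fin (4^k), ∫ x in ti i, g x = ∫ x in t, g x :=
    (Fin.sum_univ_eq_sum_range (fun j => ∫ x in triSet (subdivAt T k j), g x) (4^k)).trans
      (aux_integral_subdivAt T g hgc k).symm
  have haeall : ∀ᵐ ω ∂Pm, ∀ i, X i ω ∈ ti i := (MeasureTheory.ae_all_iff).mpr hmem
  have haesum : ∀ᵐ ω ∂Pm, ∑ i : Fin (4^k), f (X i ω) = ∑ i : Fin (4^k), Y i ω := by
    filter_upwards [haeall] with ω hω
    exact Finset.sum_congr rfl (fun i _ => hfg (hti_sub i (hω i)))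
  have hintf : ∫ x in t, f x = ∫ x in t, g x := setIntegral_congr_fun htc.measurableSet hfg
  have part1 : (∫ ω, (4 ^ k : ℝ)⁻¹ * ∑ i : Fin (4^k), f (X i ω) ∂Pm) = ∫ x in t, f x := by
    have e1 : (∫ ω, (4 ^ k : ℝ)⁻¹ * ∑ i : Fin (4^k), f (X i ω) ∂Pm)
        = ∫ ω, (4 ^ k : ℝ)⁻¹ * ∑ i : Fin (4^k), Y i ω ∂Pm := by
      apply integral_congr_ae
      filter_upwards [haesum] with ω hω
      rw [hω]
    rw [e1, MeasureTheory.integral_const_mul, integral_finset_sum _ (fun i _ => hYint i),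
      Finset.sum_congr rfl (fun i _ => hEY i), ← Finset.mul_sum, hintf, ← hsum_int,
      ← mul_assoc, inv_mul_cancel₀ (ne_of_gt hN0), one_mul]
  set S : Ω' → ℝ := ∑ i : Fin (4^k), Y i with hSdef
  have hSapp : ∀ ω, S ω = ∑ i : Fin (4^k), Y i ω := fun ω => by
    rw [hSdef]; simp [Finset.sum_apply]
  have hS2 : MemLp S 2 Pm := memLp_finset_sum' _ (fun i _ => hY2 i)
  have hES : ∫ ω, S ω ∂Pm = (4:ℝ)^k * ∫ x in t, g x := by
    simp only [hSapp]
    rw [integral_finset_sum _ (fun i _ => hYint i),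
      Finset.sum_congr rfl (fun i _ => hEY i), ← Finset.mul_sum, hsum_int]
  have hvar_eq : variance S Pm = ∫ ω, (S ω - ∫ ω', S ω' ∂Pm)^2 ∂Pm := by
    rw [variance_eq_integral hS2.aemeasurable]
  have hvar_sum : variance S Pm = ∑ i : Fin (4^k), variance (Y i) Pm := by
    rw [hSdef]
    apply IndepFun.variance_sum (fun i _ => hY2 i)
    intro i _ j _ hij
    exact (hindep.indepFun hij).comp hgm hgm
  have hvar_i : ∀ i, variance (Y i) Pm ≤ D^2 := by
    intro i
    set c := g (p i) with hcdef
    have hint2 : Integrable (fun ω => Y i ω ^ 2) Pm := (hY2 i).integrable_sq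
    have hexp : ∫ ω, (Y i ω - c)^2 ∂Pm
        = (∫ ω, Y i ω^2 ∂Pm) - 2*c*(∫ ω, Y i ω ∂Pm) + c^2 := by
      have he : ∀ ω, (Y i ω - c)^2 = Y i ω^2 - 2*c*Y i ω + c^2 := fun ω => by ring
      simp only [he]
      have hA : Integrable (fun ω => Y i ω ^ 2 - 2*c*Y i ω) Pm :=
        hint2.sub ((hYint i).const_mul (2*c))
      rw [integral_add hA (integrable_const _),
        integral_sub hint2 ((hYint i).const_mul (2*c)), MeasureTheory.integral_const_mul,
        integral_const]
      simp [measure_univ]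
    have hin : Integrable (fun ω => (Y i ω - c)^2) Pm :=
      ((hY2 i).sub (memLp_const c)).integrable_sq
    have hb2 : ∫ ω, (Y i ω - c)^2 ∂Pm ≤ D^2 := by
      calc ∫ ω, (Y i ω - c)^2 ∂Pm ≤ ∫ _ω, D^2 ∂Pm := by
            apply integral_mono_ae hin (integrable_const _)
            filter_upwards [hbound i] with ω hω
            calc (Y i ω - c)^2 = |Y i ω - c|^2 := (sq_abs _).symm
              _ ≤ D^2 := by nlinarith [abs_nonneg (Y i ω - c)]
        _ = D^2 := by simp [measure_univ]
    rw [variance_eq_sub (hY2 i)]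
    have hμ2 : Pm[(Y i)^(2:ℕ)] = ∫ ω, Y i ω^2 ∂Pm := by
      apply integral_congr_ae
      apply Filter.Eventually.of_forall
      intro ω
      simp [Pi.pow_apply]
    rw [hμ2]
    nlinarith [sq_nonneg ((∫ ω, Y i ω ∂Pm) - c), hexp, hb2]
  have part2expr : (∫ ω, ((4 ^ k : ℝ)⁻¹ * ∑ i : Fin (4^k), f (X i ω) - ∫ x in t, f x) ^ 2 ∂Pm)
      = (((4:ℝ)^k)⁻¹)^2 * variance S Pm := by
    rw [hvar_eq, ← MeasureTheory.integral_const_mul]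
    apply integral_congr_ae
    filter_upwards [haesum] with ω hω
    rw [hω, ← hSapp ω, hintf, hES]
    have he : (4 ^ k : ℝ)⁻¹ * S ω - ∫ x in t, g x
        = (4 ^ k:ℝ)⁻¹ * (S ω - (4:ℝ)^k * ∫ x in t, g x) := by
      field_simp
    rw [he, mul_pow]
  constructor
  · exact part1
  · rw [part2expr, hvar_sum]
    have hsumvar : ∑ i : Fin (4^k), variance (Y i) Pm ≤ (4^k : ℝ) * D^2 := by
      calc ∑ i : Fin (4^k), variance (Y i) Pm ≤ ∑ _i : Fin (4^k), D^2 :=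
            Finset.sum_le_sum (fun i _ => hvar_i i)
        _ = (4^k : ℝ) * D^2 := by
            rw [Finset.sum_const, Finset.card_univ, Fintype.card_fin, nsmul_eq_mul]
            push_cast
            ring
    calc (((4:ℝ)^k)⁻¹)^2 * ∑ i : Fin (4^k), variance (Y i) Pm
        ≤ (((4:ℝ)^k)⁻¹)^2 * ((4^k : ℝ) * D^2) :=
          mul_le_mul_of_nonneg_left hsumvar (by positivity)
      _ = L ^ 2 * Metric.diam t ^ 2 / ((4 ^ k : ℝ)) ^ 2 := by
          rw [hDdef]
          have h24 : (4:ℝ)^k = ((2:ℝ)^k)^2 := by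
            rw [← pow_mul, mul_comm, pow_mul]
            norm_num
          rw [h24]
          have h2pos : (0:ℝ) < (2:ℝ)^k := by positivity
          field_simp
end
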